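/- Let $f : \mathbb{R}^n \to \mathbb{R}_+$ be continuous, not identically zero, with Gaussian decay (there exist $C, \delta > 0$ with $f(z) \le C e^{-\delta|z|^2}$). For $s > 0$ set $p_s = 1 - e^{-2s}$, $q_s = 1 - e^{2s}$, and $F^{(s)}(x) := \int_{\mathbb{R}^n} e^{\frac1{p_s}\langle x, z\rangle} f(z)^{1/p_s}\, dz$. Then for every $x \in \mathbb{R}^n$, $\lim_{s \to 0} F^{(s)}(x)^{q_s} = \big( \sup_{z \in \mathbb{R}^n} e^{\langle x, z\rangle} f(z) \big)^{-1} = f^\circ(x)$. -/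

import Mathlib

open MeasureTheory Real Filter
open scoped ENNReal Topology

noncomputable section

private lemma aux_rpow_tendsto {α : Type*} {l : Filter α} {v : ℝ≥0∞} (hv0 : v ≠ 0) (hvt : v ≠ ⊤)
    {u : α → ℝ} {e : ℝ} (hu : Tendsto u l (𝓝 e)) :
    Tendsto (fun a => v ^ u a) l (𝓝 (v ^ e)) := by
  have hvr : 0 < v.toReal := ENNReal.toReal_pos hv0 hvt
  have hrw : ∀ y : ℝ, v ^ y = ENNReal.ofReal (v.toReal ^ y) := fun y => by
    rw [← ENNReal.ofReal_rpow_of_pos hvr, ENNReal.ofReal_toReal hvt]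
  simp_rw [hrw]
  refine ENNReal.tendsto_ofReal ?_
  simp_rw [Real.rpow_def_of_pos hvr]
  exact (Real.continuous_exp.tendsto _).comp (tendsto_const_nhds.mul hu)

private lemma aux_rpow_le_of_nonpos {x y : ℝ≥0∞} {c : ℝ} (hc : c ≤ 0) (h : x ≤ y) :
    y ^ c ≤ x ^ c := by
  have h2 := ENNReal.inv_le_inv.2 (ENNReal.rpow_le_rpow h (neg_nonneg.2 hc))
  rwa [← ENNReal.rpow_neg, ← ENNReal.rpow_neg, neg_neg] at h2

private lemma main_tendsto {n : ℕ} (g : EuclideanSpace ℝ (Fin n) → ℝ) (hgc : Continuous g)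
    (hgne : ∃ z, 0 < g z)
    (hIfin : (∫⁻ z, ENNReal.ofReal (g z)) ≠ ⊤)
    (hSfin : (⨆ z, ENNReal.ofReal (g z)) ≠ ⊤) :
    Tendsto (fun s : ℝ =>
        (∫⁻ z, ENNReal.ofReal (g z) ^ (1 / (1 - Real.exp (-2 * s)))) ^ (1 - Real.exp (2 * s)))
      (𝓝[>] (0 : ℝ)) (𝓝 (⨆ z, ENNReal.ofReal (g z))⁻¹) := by
  set G : EuclideanSpace ℝ (Fin n) → ℝ≥0∞ := fun z => ENNReal.ofReal (g z) with hG
  have hGmeas : Measurable G := (hgc.measurable).ennreal_ofReal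
  set S : ℝ≥0∞ := ⨆ z, G z with hS
  set I : ℝ≥0∞ := ∫⁻ z, G z with hI
  set l : Filter ℝ := 𝓝[>] (0 : ℝ) with hl
  set A : ℝ → ℝ≥0∞ := fun s => ∫⁻ z, G z ^ (1 / (1 - Real.exp (-2 * s))) with hA
  set T : ℝ → ℝ≥0∞ := fun s => A s ^ (1 - Real.exp (2 * s)) with hT
  have hS0 : S ≠ 0 := by
    obtain ⟨z1, hz1⟩ := hgne
    have : (0 : ℝ≥0∞) < G z1 := by simpa [hG] using ENNReal.ofReal_pos.2 hz1
    exact (this.trans_le (le_iSup G z1)).ne'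
  -- key construction of positive-measure sets where g is bounded below
  have key : ∀ b : ℝ≥0∞, b < S → ∃ t : ℝ, 0 < t ∧ b < ENNReal.ofReal t ∧
      ∃ V : Set (EuclideanSpace ℝ (Fin n)),
        (∀ z ∈ V, t ≤ g z) ∧ volume V ≠ 0 ∧ volume V ≠ ⊤ := by
    intro b hb
    rw [hS, lt_iSup_iff] at hb
    obtain ⟨z0, hz0⟩ := hb
    have hbtop : b ≠ ⊤ := ne_top_of_lt hz0
    have h1 : b.toReal < g z0 := (ENNReal.lt_ofReal_iff_toReal_lt hbtop).1 hz0
    have hbnn : (0 : ℝ) ≤ b.toReal := ENNReal.toReal_nonneg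
    have ht0 : 0 < (b.toReal + g z0) / 2 := by linarith
    have hbt : b < ENNReal.ofReal ((b.toReal + g z0) / 2) :=
      (ENNReal.lt_ofReal_iff_toReal_lt hbtop).2 (by linarith)
    refine ⟨(b.toReal + g z0) / 2, ht0, hbt, ?_⟩
    refine ⟨{z | (b.toReal + g z0) / 2 < g z} ∩ Metric.ball z0 1, fun z hz => (hz.1).le, ?_, ?_⟩
    · have hopen : IsOpen ({z | (b.toReal + g z0) / 2 < g z} ∩ Metric.ball z0 1) :=
        (isOpen_lt continuous_const hgc).inter Metric.isOpen_ball
      have hne : z0 ∈ ({z | (b.toReal + g z0) / 2 < g z} ∩ Metric.ball z0 1) :=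
        ⟨by simp only [Set.mem_setOf_eq]; linarith, Metric.mem_ball_self one_pos⟩
      exact (hopen.measure_pos volume ⟨z0, hne⟩).ne'
    · exact ((measure_mono Set.inter_subset_right).trans_lt measure_ball_lt_top).ne
  have hI0 : I ≠ 0 := by
    obtain ⟨t, ht0, -, V, hVt, hV0, -⟩ := key 0 (pos_iff_ne_zero.2 hS0)
    have h1 : ENNReal.ofReal t * volume V ≤ I := by
      calc ENNReal.ofReal t * volume V = ∫⁻ _ in V, ENNReal.ofReal t := (setLIntegral_const V _).symm
        _ ≤ ∫⁻ z in V, G z :=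
          setLIntegral_mono hGmeas fun z hz => ENNReal.ofReal_le_ofReal (hVt z hz)
        _ ≤ I := setLIntegral_le_lintegral V G
    intro h
    rw [h, nonpos_iff_eq_zero, mul_eq_zero] at h1
    rcases h1 with h1 | h1
    · exact (ENNReal.ofReal_pos.2 ht0).ne' h1
    · exact hV0 h1
  have hev : Set.Ioi (0 : ℝ) ∈ l := self_mem_nhdsWithin
  -- exponent limits
  have hp_t : Tendsto (fun s : ℝ => 1 - Real.exp (-2 * s)) l (𝓝 0) := by
    have : Tendsto (fun s : ℝ => 1 - Real.exp (-2 * s)) (𝓝 0) (𝓝 (1 - Real.exp (-2 * 0))) :=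
      Continuous.tendsto (by continuity) 0
    simpa using this.mono_left nhdsWithin_le_nhds
  have he_t : Tendsto (fun s : ℝ => Real.exp (2 * s)) l (𝓝 1) := by
    have : Tendsto (fun s : ℝ => Real.exp (2 * s)) (𝓝 0) (𝓝 (Real.exp (2 * 0))) :=
      Continuous.tendsto (by continuity) 0
    simpa using this.mono_left nhdsWithin_le_nhds
  have hu1 : Tendsto (fun s : ℝ => (1 - (1 - Real.exp (-2 * s))) * -Real.exp (2 * s)) l
      (𝓝 (-1)) := by
    have h := ((tendsto_const_nhds : Tendsto (fun _ : ℝ => (1 : ℝ)) l (𝓝 1)).sub hp_t).mul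
      he_t.neg
    simpa using h
  have hu2 : Tendsto (fun s : ℝ => (1 - Real.exp (-2 * s)) * -Real.exp (2 * s)) l (𝓝 0) := by
    have := hp_t.mul he_t.neg
    simpa using this
  have hu3 : Tendsto (fun s : ℝ => -Real.exp (2 * s)) l (𝓝 (-1)) := by simpa using he_t.neg
  -- per-s facts
  have hps : ∀ s : ℝ, 0 < s → 0 < 1 - Real.exp (-2 * s) := by
    intro s hs
    have : Real.exp (-2 * s) < 1 := Real.exp_lt_one_iff.2 (by linarith)
    linarith
  have hkey_exp : ∀ s : ℝ, 0 < s →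
      (1 - Real.exp (2 * s)) = (1 - Real.exp (-2 * s)) * -Real.exp (2 * s) := by
    intro s hs
    have h1 : Real.exp (-2 * s) * Real.exp (2 * s) = 1 := by
      rw [← Real.exp_add]; norm_num
    nlinarith [h1]
  -- liminf side
  have hinf : S⁻¹ ≤ liminf T l := by
    have hlow : ∀ᶠ s in l, S ^ ((1 - (1 - Real.exp (-2 * s))) * -Real.exp (2 * s)) *
        I ^ ((1 - Real.exp (-2 * s)) * -Real.exp (2 * s)) ≤ T s := by
      refine Filter.eventually_of_mem hev fun s hs => ?_
      have hs' : (0 : ℝ) < s := hs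
      set p := 1 - Real.exp (-2 * s) with hp
      have hp0 : 0 < p := hps s hs'
      have hcp : 1 / p * p = 1 := by field_simp
      have step1 : A s ≤ S ^ (1 / p - 1) * I := by
        have hc1 : 1 ≤ 1 / p := by
          rw [le_div_iff₀ hp0]
          have : Real.exp (-2 * s) > 0 := Real.exp_pos _
          nlinarith
        have hpt : ∀ z, G z ^ (1 / p) ≤ S ^ (1 / p - 1) * G z := by
          intro z
          rcases eq_or_ne (G z) 0 with h0 | h0
          · rw [h0, ENNReal.zero_rpow_of_pos (by linarith)]
            exact zero_le
          · have hne' : G z ≠ ⊤ := ENNReal.ofReal_ne_top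
            have heq : G z ^ (1 / p) = G z ^ (1 / p - 1) * G z := by
              conv_lhs => rw [show 1 / p = (1 / p - 1) + 1 by ring]
              rw [ENNReal.rpow_add _ _ h0 hne', ENNReal.rpow_one]
            rw [heq]
            exact mul_le_mul_left
              (ENNReal.rpow_le_rpow (le_iSup G z) (by linarith)) _
        calc A s ≤ ∫⁻ z, S ^ (1 / p - 1) * G z := lintegral_mono hpt
          _ = S ^ (1 / p - 1) * I :=
            lintegral_const_mul' _ _ (ENNReal.rpow_ne_top_of_nonneg (by linarith) hSfin)
      have step2 : A s ^ p ≤ S ^ (1 - p) * I ^ p := by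
        calc A s ^ p ≤ (S ^ (1 / p - 1) * I) ^ p := ENNReal.rpow_le_rpow step1 hp0.le
          _ = (S ^ (1 / p - 1)) ^ p * I ^ p := ENNReal.mul_rpow_of_nonneg _ _ hp0.le
          _ = S ^ (1 - p) * I ^ p := by
            rw [← ENNReal.rpow_mul]
            congr 2
            rw [show (1 / p - 1) * p = 1 / p * p - p by ring, hcp]
      have step3 : T s = (A s ^ p) ^ (-Real.exp (2 * s)) := by
        rw [hT]
        simp only
        rw [hkey_exp s hs', ← hp, ENNReal.rpow_mul]
      rw [step3]
      calc S ^ ((1 - p) * -Real.exp (2 * s)) * I ^ (p * -Real.exp (2 * s))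
          = (S ^ (1 - p)) ^ (-Real.exp (2 * s)) * (I ^ p) ^ (-Real.exp (2 * s)) := by
            rw [← ENNReal.rpow_mul, ← ENNReal.rpow_mul]
        _ = (S ^ (1 - p) * I ^ p) ^ (-Real.exp (2 * s)) :=
            (ENNReal.mul_rpow_of_ne_top (ENNReal.rpow_ne_top_of_nonneg (by nlinarith [Real.exp_pos (-2*s)]) hSfin)
              (ENNReal.rpow_ne_top_of_nonneg hp0.le hIfin) _).symm
        _ ≤ (A s ^ p) ^ (-Real.exp (2 * s)) := by
            refine aux_rpow_le_of_nonpos ?_ step2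
            have := Real.exp_pos (2 * s); linarith
    have hlim : Tendsto (fun s : ℝ => S ^ ((1 - (1 - Real.exp (-2 * s))) * -Real.exp (2 * s)) *
        I ^ ((1 - Real.exp (-2 * s)) * -Real.exp (2 * s))) l (𝓝 S⁻¹) := by
      have h1 := aux_rpow_tendsto hS0 hSfin hu1
      have h2 := aux_rpow_tendsto hI0 hIfin hu2
      have h3 := ENNReal.Tendsto.mul h1
        (Or.inl (ENNReal.rpow_pos (pos_iff_ne_zero.2 hS0) hSfin).ne') h2
        (Or.inl (by simp [ENNReal.rpow_zero]))
      simpa [ENNReal.rpow_neg, ENNReal.rpow_one, ENNReal.rpow_zero, mul_one] using h3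
    calc S⁻¹ = liminf (fun s : ℝ => S ^ ((1 - (1 - Real.exp (-2 * s))) * -Real.exp (2 * s)) *
        I ^ ((1 - Real.exp (-2 * s)) * -Real.exp (2 * s))) l := hlim.liminf_eq.symm
      _ ≤ liminf T l := liminf_le_liminf hlow
  -- limsup side
  have hsup : limsup T l ≤ S⁻¹ := by
    refine le_of_forall_gt_imp_ge_of_dense fun c' hc' => ?_
    have hb : c'⁻¹ < S := ENNReal.inv_lt_iff_inv_lt.1 hc'
    obtain ⟨t, ht0, hbt, V, hVt, hV0, hVfin⟩ := key c'⁻¹ hb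
    have hup : ∀ᶠ s in l, T s ≤ (ENNReal.ofReal t) ^ (-Real.exp (2 * s)) *
        (volume V) ^ ((1 - Real.exp (-2 * s)) * -Real.exp (2 * s)) := by
      refine Filter.eventually_of_mem hev fun s hs => ?_
      have hs' : (0 : ℝ) < s := hs
      set p := 1 - Real.exp (-2 * s) with hp
      have hp0 : 0 < p := hps s hs'
      have hcp : 1 / p * p = 1 := by field_simp
      have step1 : ENNReal.ofReal t ^ (1 / p) * volume V ≤ A s := by
        calc ENNReal.ofReal t ^ (1 / p) * volume V
            = ∫⁻ _ in V, ENNReal.ofReal t ^ (1 / p) := (setLIntegral_const V _).symm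
          _ ≤ ∫⁻ z in V, G z ^ (1 / p) :=
            setLIntegral_mono (hGmeas.pow_const _) fun z hz =>
              ENNReal.rpow_le_rpow (ENNReal.ofReal_le_ofReal (hVt z hz)) (by positivity)
          _ ≤ A s := setLIntegral_le_lintegral V _
      have step2 : ENNReal.ofReal t * volume V ^ p ≤ A s ^ p := by
        calc ENNReal.ofReal t * volume V ^ p
            = (ENNReal.ofReal t ^ (1 / p)) ^ p * volume V ^ p := by
              rw [← ENNReal.rpow_mul, hcp, ENNReal.rpow_one]
          _ = (ENNReal.ofReal t ^ (1 / p) * volume V) ^ p :=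
              (ENNReal.mul_rpow_of_nonneg _ _ hp0.le).symm
          _ ≤ A s ^ p := ENNReal.rpow_le_rpow step1 hp0.le
      have step3 : T s = (A s ^ p) ^ (-Real.exp (2 * s)) := by
        rw [hT]
        simp only
        rw [hkey_exp s hs', ← hp, ENNReal.rpow_mul]
      rw [step3]
      calc (A s ^ p) ^ (-Real.exp (2 * s))
          ≤ (ENNReal.ofReal t * volume V ^ p) ^ (-Real.exp (2 * s)) := by
            refine aux_rpow_le_of_nonpos ?_ step2
            have := Real.exp_pos (2 * s); linarith
        _ = ENNReal.ofReal t ^ (-Real.exp (2 * s)) * volume V ^ (p * -Real.exp (2 * s)) := by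
            rw [ENNReal.mul_rpow_of_ne_top ENNReal.ofReal_ne_top
              (ENNReal.rpow_ne_top_of_nonneg hp0.le hVfin), ← ENNReal.rpow_mul]
    have hlim : Tendsto (fun s : ℝ => (ENNReal.ofReal t) ^ (-Real.exp (2 * s)) *
        (volume V) ^ ((1 - Real.exp (-2 * s)) * -Real.exp (2 * s))) l
        (𝓝 ((ENNReal.ofReal t)⁻¹)) := by
      have h1 := aux_rpow_tendsto (ENNReal.ofReal_pos.2 ht0).ne' ENNReal.ofReal_ne_top hu3
      have h2 := aux_rpow_tendsto hV0 hVfin hu2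
      have h3 := ENNReal.Tendsto.mul h1
        (Or.inl (ENNReal.rpow_pos (ENNReal.ofReal_pos.2 ht0) ENNReal.ofReal_ne_top).ne') h2
        (Or.inl (by simp [ENNReal.rpow_zero]))
      simpa [ENNReal.rpow_neg, ENNReal.rpow_one, ENNReal.rpow_zero, mul_one] using h3
    calc limsup T l ≤ limsup (fun s : ℝ => (ENNReal.ofReal t) ^ (-Real.exp (2 * s)) *
        (volume V) ^ ((1 - Real.exp (-2 * s)) * -Real.exp (2 * s))) l := limsup_le_limsup hup
      _ = (ENNReal.ofReal t)⁻¹ := hlim.limsup_eq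
      _ ≤ c' := by
          have := ENNReal.inv_le_inv' hbt.le
          simpa using this
  exact tendsto_of_le_liminf_of_limsup_le hinf hsup

/-- The polar (dual) function `f°(x) = inf_y exp(-⟨x,y⟩)/f(y)`, valued in `[0,∞]`. -/
def polarFn {n : ℕ} (f : EuclideanSpace ℝ (Fin n) → ℝ) (x : EuclideanSpace ℝ (Fin n)) : ℝ≥0∞ :=
  ⨅ y : EuclideanSpace ℝ (Fin n),
    ENNReal.ofReal (Real.exp (-(inner ℝ x y : ℝ))) / ENNReal.ofReal (f y)

/-- `F^{(s)}(x) = ∫ e^{⟨x,z⟩/p_s} f(z)^{1/p_s} dz` with `p_s = 1 - e^{-2s}`. -/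
def expTransformS {n : ℕ} (s : ℝ) (f : EuclideanSpace ℝ (Fin n) → ℝ)
    (x : EuclideanSpace ℝ (Fin n)) : ℝ≥0∞ :=
  ∫⁻ z, ENNReal.ofReal (Real.exp ((1 / (1 - Real.exp (-2 * s))) * (inner ℝ x z : ℝ))) *
    ENNReal.ofReal (f z) ^ (1 / (1 - Real.exp (-2 * s)))

/-- Pointwise limit (2.2): with `p_s = 1 - e^{-2s}`, `q_s = 1 - e^{2s}`,
`F^{(s)}(x)^{q_s} → (sup_z e^{⟨x,z⟩} f(z))⁻¹ = f°(x)` as `s → 0`. -/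
theorem pointwise_limit_to_polar (n : ℕ) (hn : 1 ≤ n)
    (f : EuclideanSpace ℝ (Fin n) → ℝ)
    (hc : Continuous f) (hpos : ∀ z, 0 ≤ f z) (hne : ∃ z, f z ≠ 0)
    (hdec : ∃ C δ : ℝ, 0 < C ∧ 0 < δ ∧ ∀ z, f z ≤ C * Real.exp (-δ * ‖z‖ ^ 2))
    (x : EuclideanSpace ℝ (Fin n)) :
    Tendsto (fun s : ℝ => expTransformS s f x ^ (1 - Real.exp (2 * s)))
        (𝓝[>] (0 : ℝ)) (𝓝 (polarFn f x)) ∧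
      (⨆ z, ENNReal.ofReal (Real.exp ((inner ℝ x z : ℝ)) * f z))⁻¹ = polarFn f x := by
  obtain ⟨C, δ, hC, hδ, hbound⟩ := hdec
  set g : EuclideanSpace ℝ (Fin n) → ℝ := fun z => Real.exp ((inner ℝ x z : ℝ)) * f z with hgdef
  have hgc : Continuous g :=
    (Real.continuous_exp.comp (continuous_const.inner continuous_id)).mul hc
  have hgne : ∃ z, 0 < g z := by
    obtain ⟨z1, hz1⟩ := hne
    exact ⟨z1, mul_pos (Real.exp_pos _) ((hpos z1).lt_of_ne (Ne.symm hz1))⟩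
  have hdom : ∀ z, g z ≤ C * Real.exp (-δ * ‖z‖ ^ 2 + (inner ℝ x z : ℝ)) := by
    intro z
    calc g z ≤ Real.exp ((inner ℝ x z : ℝ)) * (C * Real.exp (-δ * ‖z‖ ^ 2)) :=
        mul_le_mul_of_nonneg_left (hbound z) (Real.exp_pos _).le
      _ = C * Real.exp (-δ * ‖z‖ ^ 2 + (inner ℝ x z : ℝ)) := by rw [Real.exp_add]; ring
  have hquad : ∀ z : EuclideanSpace ℝ (Fin n),
      -δ * ‖z‖ ^ 2 + (inner ℝ x z : ℝ) ≤ ‖x‖ ^ 2 / (4 * δ) := by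
    intro z
    rw [le_div_iff₀ (by positivity : (0 : ℝ) < 4 * δ)]
    nlinarith [sq_nonneg (2 * δ * ‖z‖ - ‖x‖),
      mul_le_mul_of_nonneg_left (real_inner_le_norm x z) (by positivity : (0 : ℝ) ≤ 4 * δ)]
  have hSfin : (⨆ z, ENNReal.ofReal (g z)) ≠ ⊤ := by
    have hle : (⨆ z, ENNReal.ofReal (g z)) ≤
        ENNReal.ofReal (C * Real.exp (‖x‖ ^ 2 / (4 * δ))) := by
      refine iSup_le fun z => ENNReal.ofReal_le_ofReal ?_
      exact (hdom z).trans
        (mul_le_mul_of_nonneg_left (Real.exp_le_exp.2 (hquad z)) hC.le)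
    exact (hle.trans_lt ENNReal.ofReal_lt_top).ne
  have hint : Integrable
      (fun v : EuclideanSpace ℝ (Fin n) => C * Real.exp (-δ * ‖v‖ ^ 2 + (inner ℝ x v : ℝ)))
      volume := by
    have h1 : Integrable (fun v : EuclideanSpace ℝ (Fin n) =>
        Complex.exp (-(δ : ℂ) * (‖v‖ : ℂ) ^ 2 + (1 : ℂ) * ((inner ℝ x v : ℝ) : ℂ))) volume :=
      GaussianFourier.integrable_cexp_neg_mul_sq_norm_add (by simpa using hδ) 1 x
    have h2 := h1.norm
    have h3 : Integrable
        (fun v : EuclideanSpace ℝ (Fin n) => Real.exp (-δ * ‖v‖ ^ 2 + (inner ℝ x v : ℝ)))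
        volume := by
      refine h2.congr (Filter.Eventually.of_forall fun v => ?_)
      have hre : (-(δ : ℂ) * (‖v‖ : ℂ) ^ 2 + (1 : ℂ) * ((inner ℝ x v : ℝ) : ℂ)) =
          (((-δ * ‖v‖ ^ 2 + (inner ℝ x v : ℝ)) : ℝ) : ℂ) := by push_cast; ring
      beta_reduce
      rw [hre, Complex.norm_exp, Complex.ofReal_re]
    exact h3.const_mul C
  have hIfin : (∫⁻ z, ENNReal.ofReal (g z)) ≠ ⊤ := by
    have hle : (∫⁻ z, ENNReal.ofReal (g z)) ≤
        ∫⁻ z, ENNReal.ofReal (C * Real.exp (-δ * ‖z‖ ^ 2 + (inner ℝ x z : ℝ))) :=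
      lintegral_mono fun z => ENNReal.ofReal_le_ofReal (hdom z)
    exact (hle.trans_lt hint.lintegral_lt_top).ne
  have hmain := main_tendsto g hgc hgne hIfin hSfin
  have hpolar : (⨆ z, ENNReal.ofReal (Real.exp ((inner ℝ x z : ℝ)) * f z))⁻¹ = polarFn f x := by
    have hterm : ∀ y, ENNReal.ofReal (Real.exp (-(inner ℝ x y : ℝ))) / ENNReal.ofReal (f y) =
        (ENNReal.ofReal (Real.exp ((inner ℝ x y : ℝ)) * f y))⁻¹ := by
      intro y
      rw [Real.exp_neg, ENNReal.ofReal_inv_of_pos (Real.exp_pos _), div_eq_mul_inv,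
        ← ENNReal.mul_inv (Or.inl (ENNReal.ofReal_pos.2 (Real.exp_pos _)).ne')
          (Or.inl ENNReal.ofReal_ne_top),
        ← ENNReal.ofReal_mul (Real.exp_pos _).le]
    rw [polarFn]
    simp only [hterm]
    exact ENNReal.inv_iSup _
  refine ⟨?_, hpolar⟩
  have hps : ∀ s : ℝ, 0 < s → 0 < 1 - Real.exp (-2 * s) := by
    intro s hs
    have : Real.exp (-2 * s) < 1 := Real.exp_lt_one_iff.2 (by linarith)
    linarith
  have hexp : ∀ s : ℝ, 0 < s → expTransformS s f x =
      ∫⁻ z, ENNReal.ofReal (g z) ^ (1 / (1 - Real.exp (-2 * s))) := by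
    intro s hs
    have hc0 : (0 : ℝ) ≤ 1 / (1 - Real.exp (-2 * s)) := (div_pos one_pos (hps s hs)).le
    rw [expTransformS]
    refine lintegral_congr fun z => ?_
    rw [ENNReal.ofReal_mul (Real.exp_pos _).le, ENNReal.mul_rpow_of_nonneg _ _ hc0]
    congr 1
    rw [mul_comm (1 / (1 - Real.exp (-2 * s))), Real.exp_mul,
      ENNReal.ofReal_rpow_of_pos (Real.exp_pos _)]
  rw [← hpolar]
  refine hmain.congr' ?_
  refine Filter.eventually_of_mem self_mem_nhdsWithin fun s hs => ?_
  simp only [hexp s hs]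

end
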